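/- arXiv:1206.1757 — 2 statements merged into one kernel-verified Lean document; each statement's English description precedes it below -/
import Mathlib

section
/- The Ligon–Schaaf map intertwines E with the Delaunay Hamiltonian: for (q,v) ∈ TS³ with 𝐪 ≠ 0, q0 > 0 and E < 0, and any φ ∈ ℝ, the point (x,y) = (α sinφ + β cosφ, ν(−α cosφ + β sinφ)) satisfies ℋ(x,y) = −γ²/(2⟨y,y⟩) = E(q,v). -/
open Matrix Real

noncomputable section

/-- The spatial (last three) components of a vector in `ℝ⁴`. -/
def sp (q : Fin 4 → ℝ) : Fin 3 → ℝ := fun i => q i.succ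

/-- The Euclidean norm on `ℝ³`, written via the dot product. -/
def nrm3 (x : Fin 3 → ℝ) : ℝ := Real.sqrt (x ⬝ᵥ x)

/-- The first standard basis vector `e₀ = (1,0,0,0)` of `ℝ⁴`. -/
def e0 : Fin 4 → ℝ := fun i => if i = 0 then 1 else 0

/-- The (constraint set defining the) tangent bundle `TS³ ⊂ ℝ⁴ × ℝ⁴`. -/
def TS3 : Set ((Fin 4 → ℝ) × (Fin 4 → ℝ)) :=
  {p | p.1 ⬝ᵥ p.1 = 1 ∧ p.1 ⬝ᵥ p.2 = 0}

/-- Right hand side of the Kepler equations of motion on `S³`: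
`v̇ = γ e₀/(1-q₀²)^{3/2} - (⟨v,v⟩ + γ q₀/(1-q₀²)^{3/2}) q`. -/
def keplerRHS (γ : ℝ) (q v : Fin 4 → ℝ) : Fin 4 → ℝ :=
  (γ / (1 - q 0 ^ 2) ^ ((3 : ℝ) / 2)) • e0
    - (v ⬝ᵥ v + γ * q 0 / (1 - q 0 ^ 2) ^ ((3 : ℝ) / 2)) • q

/-- The Kepler Hamiltonian on `S³`: `H = ½⟨v,v⟩ - γ q₀ / (1-q₀²)^{1/2}`. -/
def Hham (γ : ℝ) (p : (Fin 4 → ℝ) × (Fin 4 → ℝ)) : ℝ :=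
  (1 / 2) * (p.2 ⬝ᵥ p.2) - γ * p.1 0 / Real.sqrt (1 - p.1 0 ^ 2)

/-- The angular momentum `𝛍 = 𝐪 × 𝐯`. -/
def mu (p : (Fin 4 → ℝ) × (Fin 4 → ℝ)) : Fin 3 → ℝ :=
  crossProduct (sp p.1) (sp p.2)

/-- The vector `𝛑 = q₀ 𝐯 - v₀ 𝐪`. -/
def pivec (p : (Fin 4 → ℝ) × (Fin 4 → ℝ)) : Fin 3 → ℝ :=
  p.1 0 • sp p.2 - p.2 0 • sp p.1

/-- The Runge–Lenz vector `𝐀 = 𝛑 × 𝛍 - γ 𝐪/|𝐪|`. -/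
def rl (γ : ℝ) (p : (Fin 4 → ℝ) × (Fin 4 → ℝ)) : Fin 3 → ℝ :=
  crossProduct (pivec p) (mu p) - (γ / nrm3 (sp p.1)) • sp p.1

/-- The energy-like integral `E = H - |𝛍|²/2`. -/
def Een (γ : ℝ) (p : (Fin 4 → ℝ) × (Fin 4 → ℝ)) : ℝ :=
  Hham γ p - (mu p ⬝ᵥ mu p) / 2

/-- `ν = γ / √(-2E)`. -/
def nuLS (γ : ℝ) (p : (Fin 4 → ℝ) × (Fin 4 → ℝ)) : ℝ :=
  γ / Real.sqrt (-2 * Een γ p)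


/-- The vector `α` of the Ligon–Schaaf map for the Kepler problem on `S³`. -/
def alphaLS (γ : ℝ) (p : (Fin 4 → ℝ) × (Fin 4 → ℝ)) : Fin 4 → ℝ :=
  Fin.cons ((sp p.1 ⬝ᵥ pivec p) / (nuLS γ p * p.1 0))
    ((nrm3 (sp p.1))⁻¹ • sp p.1 - ((sp p.1 ⬝ᵥ pivec p) / (γ * p.1 0)) • pivec p)

/-- The vector `β` of the Ligon–Schaaf map for the Kepler problem on `S³`. -/
def betaLS (γ : ℝ) (p : (Fin 4 → ℝ) × (Fin 4 → ℝ)) : Fin 4 → ℝ :=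
  Fin.cons (nrm3 (sp p.1) / (γ * p.1 0) * (pivec p ⬝ᵥ pivec p) - 1)
    ((nrm3 (sp p.1) / (nuLS γ p * p.1 0)) • pivec p)

/-- The phase `φ = (𝐪·𝛑)/(ν q₀) = α₀` of the Ligon–Schaaf map. -/
def phiLS (γ : ℝ) (p : (Fin 4 → ℝ) × (Fin 4 → ℝ)) : ℝ :=
  (sp p.1 ⬝ᵥ pivec p) / (nuLS γ p * p.1 0)

/-- The Ligon–Schaaf map `Φ` for the Kepler problem on `S³`. -/
def PhiLS (γ : ℝ) (p : (Fin 4 → ℝ) × (Fin 4 → ℝ)) : (Fin 4 → ℝ) × (Fin 4 → ℝ) :=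
  (Real.sin (phiLS γ p) • alphaLS γ p + Real.cos (phiLS γ p) • betaLS γ p,
   nuLS γ p • (-Real.cos (phiLS γ p) • alphaLS γ p + Real.sin (phiLS γ p) • betaLS γ p))

private lemma fs0 : (Fin.succ 0 : Fin 4) = 1 := rfl
private lemma fs1 : (Fin.succ 1 : Fin 4) = 2 := rfl
private lemma fs2 : (Fin.succ 2 : Fin 4) = 3 := rfl

private lemma dot4_split (w u : Fin 4 → ℝ) :
    w ⬝ᵥ u = w 0 * u 0 + (fun i : Fin 3 => w i.succ) ⬝ᵥ (fun i => u i.succ) := by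
  simp [dotProduct, Fin.sum_univ_four, Fin.sum_univ_three, fs0, fs1, fs2]; ring

private lemma dot3_e1 (c d : ℝ) (x y : Fin 3 → ℝ) :
    (c • x - d • y) ⬝ᵥ (c • x - d • y)
      = c^2*(x ⬝ᵥ x) - 2*c*d*(x ⬝ᵥ y) + d^2*(y ⬝ᵥ y) := by
  simp [dotProduct, Fin.sum_univ_three]; ring

private lemma dot3_e2 (c d e : ℝ) (x y : Fin 3 → ℝ) :
    (c • x - d • y) ⬝ᵥ (e • y) = c*e*(x ⬝ᵥ y) - d*e*(y ⬝ᵥ y) := by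
  simp [dotProduct, Fin.sum_univ_three]; ring

private lemma dot3_e3 (d e : ℝ) (y : Fin 3 → ℝ) :
    (d • y) ⬝ᵥ (e • y) = d*e*(y ⬝ᵥ y) := by
  simp [dotProduct, Fin.sum_univ_three]; ring

private lemma dot3_e4 (c d : ℝ) (x y : Fin 3 → ℝ) :
    x ⬝ᵥ (c • y - d • x) = c*(x ⬝ᵥ y) - d*(x ⬝ᵥ x) := by
  simp [dotProduct, Fin.sum_univ_three]; ring

private lemma cross_self_dot (x y : Fin 3 → ℝ) :
    (crossProduct x y) ⬝ᵥ (crossProduct x y) = (x ⬝ᵥ x)*(y ⬝ᵥ y) - (x ⬝ᵥ y)^2 := by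
  simp [crossProduct, dotProduct, Fin.sum_univ_three]; ring

private lemma cons_dot (a b : ℝ) (x y : Fin 3 → ℝ) :
    (Fin.cons a x : Fin 4 → ℝ) ⬝ᵥ Fin.cons b y = a*b + x ⬝ᵥ y := by
  simp [dotProduct, Fin.sum_univ_succ]

private lemma dot4_e1 (ν c s : ℝ) (A B : Fin 4 → ℝ) :
    (ν • (-c • A + s • B)) ⬝ᵥ (ν • (-c • A + s • B))
      = ν^2 * (c^2*(A ⬝ᵥ A) - 2*c*s*(A ⬝ᵥ B) + s^2*(B ⬝ᵥ B)) := by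
  simp [dotProduct, Fin.sum_univ_four]; ring


theorem LS_map_intertwines_energy (γ : ℝ) (hγ : 0 < γ)
    (p : (Fin 4 → ℝ) × (Fin 4 → ℝ)) (hp : p ∈ TS3) (hqnz : sp p.1 ≠ 0)
    (hq0 : 0 < p.1 0) (hE : Een γ p < 0) (φ : ℝ) :
    -γ ^ 2 / (2 * ((nuLS γ p • (-Real.cos φ • alphaLS γ p + Real.sin φ • betaLS γ p)) ⬝ᵥ
      (nuLS γ p • (-Real.cos φ • alphaLS γ p + Real.sin φ • betaLS γ p)))) = Een γ p := by
  obtain ⟨hp1, hp2⟩ := hp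
  set Q : Fin 3 → ℝ := sp p.1 with hQ
  set V : Fin 3 → ℝ := sp p.2 with hV
  set q0 : ℝ := p.1 0 with hq0d
  set v0 : ℝ := p.2 0 with hv0d
  set r : ℝ := nrm3 (sp p.1) with hrd
  set E : ℝ := Een γ p with hEd
  set s : ℝ := Real.sqrt (-2 * Een γ p) with hsd
  have hQQnn : 0 ≤ Q ⬝ᵥ Q := Finset.sum_nonneg fun i _ => mul_self_nonneg _
  have hQQpos : 0 < Q ⬝ᵥ Q := by
    rcases hQQnn.lt_or_eq with h | h
    · exact h
    · exact absurd ((dotProduct_self_eq_zero).mp h.symm) hqnz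
  have hrpos : 0 < r := Real.sqrt_pos.mpr hQQpos
  have hr2 : r^2 = Q ⬝ᵥ Q := Real.sq_sqrt hQQnn
  have h1 : q0^2 + Q ⬝ᵥ Q = 1 := by
    have := dot4_split p.1 p.1; rw [hp1] at this
    rw [pow_two]; exact this.symm
  have h2 : q0*v0 + Q ⬝ᵥ V = 0 := by
    have := dot4_split p.1 p.2; rw [hp2] at this
    exact this.symm
  have hsq1 : Real.sqrt (1 - q0^2) = r := by
    have h : 1 - q0^2 = r^2 := by rw [hr2]; linarith
    rw [h, Real.sqrt_sq hrpos.le]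
  have hVV4 : p.2 ⬝ᵥ p.2 = v0^2 + V ⬝ᵥ V := by
    have := dot4_split p.2 p.2
    rw [pow_two]; exact this
  have hPspat : pivec p = q0 • V - v0 • Q := rfl
  have hQPv : Q ⬝ᵥ pivec p = -v0 := by
    rw [hPspat, dot3_e4]
    linear_combination q0 * h2 - v0 * h1
  have hPP : pivec p ⬝ᵥ pivec p = q0^2*(V ⬝ᵥ V) + q0^2*v0^2 + v0^2 := by
    rw [hPspat, dot3_e1, dotProduct_comm V Q]
    linear_combination v0^2 * h1 - 2*q0*v0*h2
  have hE' : E = (1/2)*(v0^2 + V ⬝ᵥ V) - γ*q0/r - ((Q ⬝ᵥ Q)*(V ⬝ᵥ V) - (Q ⬝ᵥ V)^2)/2 := by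
    rw [hEd]
    unfold Een Hham mu
    rw [cross_self_dot, hVV4, ← hQ, ← hV, ← hq0d, hsq1]
  have hs2 : s^2 = -2*E := Real.sq_sqrt (by rw [← hEd]; linarith)
  have hspos : 0 < s := Real.sqrt_pos.mpr (by rw [← hEd]; linarith)
  have hνd : nuLS γ p = γ / s := rfl
  have h1' : q0^2 + r^2 = 1 := by rw [hr2]; exact h1
  have hPP2 : pivec p ⬝ᵥ pivec p = 2*γ*q0/r - s^2 := by
    rw [hPP, hs2, hE', ← hr2]
    linear_combination (V ⬝ᵥ V) * h1' + (q0*v0 - Q ⬝ᵥ V) * h2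
  have hAA : alphaLS γ p ⬝ᵥ alphaLS γ p = 1 := by
    unfold alphaLS
    rw [← hQ, ← hq0d, ← hrd, hνd, cons_dot, dot3_e1, hQPv, hPP2, ← hr2]
    field_simp
    ring
  have hBB : betaLS γ p ⬝ᵥ betaLS γ p = 1 := by
    unfold betaLS
    rw [← hQ, ← hq0d, ← hrd, hνd, cons_dot, dot3_e3, hPP2]
    field_simp
    ring
  have hAB : alphaLS γ p ⬝ᵥ betaLS γ p = 0 := by
    unfold alphaLS betaLS
    rw [← hQ, ← hq0d, ← hrd, hνd, cons_dot, dot3_e2, hQPv, hPP2]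
    field_simp
    ring
  rw [dot4_e1, hAA, hBB, hAB]
  have hsum : (Real.cos φ)^2 * 1 - 2*(Real.cos φ)*(Real.sin φ)*0 + (Real.sin φ)^2*1 = 1 := by
    linear_combination Real.sin_sq_add_cos_sq φ
  rw [hsum, mul_one, hνd]
  have hE0 : E ≠ 0 := ne_of_lt hE
  field_simp
  linear_combination (-1 : ℝ) * hs2


end
end

section
/- Along any solution (q(t),v(t)) of the Kepler equations on S³ lying in TS³ with 0 < q0(t) < 1, 𝐪(t) ≠ 0 and E < 0, the vectors α(t) = α(q(t),v(t)) and β(t) = β(q(t),v(t)) satisfy dα/dt = (√(−2E)/(q0|𝐪|))β and dβ/dt = −(√(−2E)/(q0|𝐪|))α. -/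
open Matrix Real

noncomputable section

-- helpers
lemma hd_cast {f : ℝ → ℝ} {a b t : ℝ} (h : HasDerivAt f a t) (e : a = b) :
    HasDerivAt f b t := e ▸ h

lemma dot_split (x y : Fin 4 → ℝ) : x ⬝ᵥ y = x 0 * y 0 + sp x ⬝ᵥ sp y := by
  simp [dotProduct, sp, Fin.sum_univ_succ]

lemma dot_self_nonneg' {n : ℕ} (x : Fin n → ℝ) : 0 ≤ x ⬝ᵥ x :=
  Finset.sum_nonneg fun i _ => mul_self_nonneg _

lemma hasDerivAt_dot {n : ℕ} {f g : ℝ → (Fin n → ℝ)} {f' g' : Fin n → ℝ} {t : ℝ}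
    (hf : ∀ i, HasDerivAt (fun u => f u i) (f' i) t)
    (hg : ∀ i, HasDerivAt (fun u => g u i) (g' i) t) :
    HasDerivAt (fun u => f u ⬝ᵥ g u) (f' ⬝ᵥ g t + f t ⬝ᵥ g') t := by
  have h : HasDerivAt (fun u => ∑ i, f u i * g u i)
      (∑ i : Fin n, (f' i * g t i + f t i * g' i)) t :=
    HasDerivAt.fun_sum fun i _ => (hf i).mul (hg i)
  simpa [dotProduct, Finset.sum_add_distrib] using h


set_option maxHeartbeats 1000000 in
theorem alpha_beta_derivatives (γ : ℝ) (hγ : 0 < γ) (I : Set ℝ) (hI : Convex ℝ I)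
    (q v : ℝ → Fin 4 → ℝ)
    (hq : ∀ t ∈ I, HasDerivAt q (v t) t)
    (hv : ∀ t ∈ I, HasDerivAt v (keplerRHS γ (q t) (v t)) t)
    (hTS : ∀ t ∈ I, (q t, v t) ∈ TS3)
    (hq0 : ∀ t ∈ I, 0 < q t 0 ∧ q t 0 < 1)
    (hqnz : ∀ t ∈ I, sp (q t) ≠ 0)
    (hE : ∀ t ∈ I, Een γ (q t, v t) < 0) :
    ∀ t ∈ I,
      HasDerivAt (fun s => alphaLS γ (q s, v s))
        ((Real.sqrt (-2 * Een γ (q t, v t)) / (q t 0 * nrm3 (sp (q t)))) • betaLS γ (q t, v t)) t ∧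
      HasDerivAt (fun s => betaLS γ (q s, v s))
        (-(Real.sqrt (-2 * Een γ (q t, v t)) / (q t 0 * nrm3 (sp (q t)))) • alphaLS γ (q t, v t)) t := by
  intro t ht
  obtain ⟨hcq, hcqv⟩ := hTS t ht
  obtain ⟨ha0, ha1⟩ := hq0 t ht
  have hEneg := hE t ht
  have hγ' : γ ≠ 0 := ne_of_gt hγ
  set a := q t 0 with ha_def
  set b := v t 0 with hb_def
  set Q : Fin 3 → ℝ := sp (q t) with hQ_def
  set V : Fin 3 → ℝ := sp (v t) with hV_def
  set P : Fin 3 → ℝ := pivec (q t, v t) with hP_def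
  set rr := nrm3 (sp (q t)) with hrr_def
  set EE := Een γ (q t, v t) with hEE_def
  set ss := Real.sqrt (-2 * EE) with hss_def
  set nn := nuLS γ (q t, v t) with hnn_def
  set vv := v t ⬝ᵥ v t with hvv_def
  have ha : a ≠ 0 := ne_of_gt ha0
  -- basic geometry facts
  have hQQ0 : (0:ℝ) < Q ⬝ᵥ Q := by
    rcases (dotProduct_self_eq_zero (v := Q)).not.mpr (by simpa [hQ_def] using hqnz t ht)
      with h
    exact lt_of_le_of_ne (dot_self_nonneg' Q) (Ne.symm h)
  have hr0 : (0:ℝ) < rr := by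
    rw [hrr_def]; exact Real.sqrt_pos.mpr (by simpa [hQ_def] using hQQ0)
  have hr : rr ≠ 0 := ne_of_gt hr0
  have hr2 : rr ^ 2 = Q ⬝ᵥ Q := by
    rw [hrr_def, nrm3, sq_sqrt (dot_self_nonneg' _)]
  have hF1 : a ^ 2 + rr ^ 2 = 1 := by
    have := dot_split (q t) (q t); rw [hcq] at this
    rw [hr2]; nlinarith [this]
  have hor : a * b + Q ⬝ᵥ V = 0 := by
    have := dot_split (q t) (v t); rw [hcqv] at this; linarith [this]
  have hQV : Q ⬝ᵥ V = -(a * b) := by linarith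
  have h1a : (1:ℝ) - a ^ 2 = rr ^ 2 := by linarith
  have hw : ((1:ℝ) - a ^ 2) ^ ((3:ℝ)/2) = rr ^ 3 := by
    rw [h1a, ← Real.rpow_natCast rr 2, ← Real.rpow_mul hr0.le]
    norm_num
  have hr3 : rr ^ 3 ≠ 0 := pow_ne_zero _ hr
  have hsqrt1a : Real.sqrt (1 - a ^ 2) = rr := by
    rw [h1a, Real.sqrt_sq hr0.le]
  -- pivec facts
  have hPvec : P = a • V - b • Q := rfl
  have hPc : ∀ i, P i = a * V i - b * Q i := fun i => rfl
  have hvv4 : vv = b ^ 2 + V ⬝ᵥ V := by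
    have h := dot_split (v t) (v t)
    rw [show v t ⬝ᵥ v t = vv from rfl] at h
    rw [h]; ring_nf; rfl
  have hQP : Q ⬝ᵥ P = -b := by
    have h1 : Q ⬝ᵥ P = a * (Q ⬝ᵥ V) - b * (Q ⬝ᵥ Q) := by
      rw [hPvec]; simp [dotProduct_sub, dotProduct_smul, smul_eq_mul]
    rw [h1, hQV, ← hr2]; linear_combination (-b) * hF1
  have hVP : V ⬝ᵥ P = a * vv := by
    have h1 : V ⬝ᵥ P = a * (V ⬝ᵥ V) - b * (Q ⬝ᵥ V) := by
      rw [hPvec]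
      simp [dotProduct_sub, dotProduct_smul, smul_eq_mul, dotProduct_comm V Q]
    rw [h1, hQV, hvv4]; ring
  have hPP : P ⬝ᵥ P = a ^ 2 * vv + b ^ 2 := by
    have h1 : P ⬝ᵥ P = a * (V ⬝ᵥ P) - b * (Q ⬝ᵥ P) := by
      nth_rewrite 1 [hPvec]
      simp [sub_dotProduct, smul_dotProduct, smul_eq_mul]
    rw [h1, hVP, hQP]; ring
  have hmm : mu (q t, v t) ⬝ᵥ mu (q t, v t) = rr ^ 2 * (V ⬝ᵥ V) - (a*b)^2 := by
    have h : mu (q t, v t) ⬝ᵥ mu (q t, v t) =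
        (Q ⬝ᵥ Q) * (V ⬝ᵥ V) - (Q ⬝ᵥ V) * (V ⬝ᵥ Q) := cross_dot_cross Q V Q V
    rw [h, dotProduct_comm V Q, hQV, ← hr2]; ring
  have hE6 : EE = (P ⬝ᵥ P) / 2 - γ * a / rr := by
    have hEval : EE = 1/2 * vv - γ * a / Real.sqrt (1 - a ^ 2)
        - (mu (q t, v t) ⬝ᵥ mu (q t, v t)) / 2 := rfl
    rw [hEval, hsqrt1a, hmm, hPP, hvv4]
    have hrw : rr ^ 2 = 1 - a ^ 2 := by linarith
    rw [hrw]; ring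
  -- s and nu facts
  have hm2E : (0:ℝ) < -2 * EE := by linarith
  have hs0 : (0:ℝ) < ss := Real.sqrt_pos.mpr hm2E
  have hs : ss ≠ 0 := ne_of_gt hs0
  have hs2 : ss ^ 2 = -2 * EE := Real.sq_sqrt hm2E.le
  have hnu : nn = γ / ss := rfl
  have hn : nn ≠ 0 := by rw [hnu]; positivity
  -- component derivatives
  have hdq : ∀ i, HasDerivAt (fun u => q u i) (v t i) t := hasDerivAt_pi.mp (hq t ht)
  have hdv : ∀ i, HasDerivAt (fun u => v u i) (keplerRHS γ (q t) (v t) i) t :=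
    hasDerivAt_pi.mp (hv t ht)
  set cc := vv + γ * a / rr ^ 3 with hcc_def
  have hk0 : keplerRHS γ (q t) (v t) 0 = γ / rr ^ 3 - cc * a := by
    simp [keplerRHS, e0, hw, ← ha_def, ← hvv_def, hcc_def]
  have hks : ∀ i : Fin 3, keplerRHS γ (q t) (v t) i.succ = -(cc * Q i) := by
    intro i
    simp [keplerRHS, e0, hw, ← ha_def, ← hvv_def, hcc_def, Fin.succ_ne_zero, hQ_def, sp]
  have hdq0 : HasDerivAt (fun u => q u 0) b t := hdq 0
  have hdv0 : HasDerivAt (fun u => v u 0) (γ / rr ^ 3 - cc * a) t := hk0 ▸ hdv 0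
  have hdQ : ∀ i, HasDerivAt (fun u => sp (q u) i) (V i) t := fun i => hdq i.succ
  have hdV : ∀ i, HasDerivAt (fun u => sp (v u) i) (-(cc * Q i)) t := fun i =>
    hks i ▸ hdv i.succ
  have hdP : ∀ i, HasDerivAt (fun u => pivec (q u, v u) i) (-(γ / rr ^ 3 * Q i)) t := by
    intro i
    refine hd_cast ((hdq0.mul (hdV i)).sub (hdv0.mul (hdQ i))) ?_
    show b * V i + a * -(cc * Q i) - ((γ / rr ^ 3 - cc * a) * Q i + b * V i)
        = -(γ / rr ^ 3 * Q i)
    ring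
  have hdr : HasDerivAt (fun u => nrm3 (sp (q u))) (-(a * b) / rr) t := by
    have hdot : HasDerivAt (fun u => sp (q u) ⬝ᵥ sp (q u)) (V ⬝ᵥ Q + Q ⬝ᵥ V) t :=
      hasDerivAt_dot hdQ hdQ
    refine hd_cast (hdot.sqrt (ne_of_gt hQQ0)) ?_
    show (V ⬝ᵥ Q + Q ⬝ᵥ V) / (2 * rr) = -(a * b) / rr
    rw [dotProduct_comm V Q, hQV]
    field_simp
    ring
  have hdQP : HasDerivAt (fun u => sp (q u) ⬝ᵥ pivec (q u, v u)) (a * vv - γ / rr) t := by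
    refine hd_cast (hasDerivAt_dot hdQ hdP) ?_
    show V ⬝ᵥ P + (Q ⬝ᵥ fun i => -(γ / rr ^ 3 * Q i)) = a * vv - γ / rr
    have h2 : (Q ⬝ᵥ fun i => -(γ / rr ^ 3 * Q i)) = -(γ / rr ^ 3) * (Q ⬝ᵥ Q) := by
      simp [dotProduct, Finset.mul_sum]
      exact Finset.sum_congr rfl fun i _ => by ring
    rw [h2, ← hr2, hVP]; field_simp; ring
  have hdPP : HasDerivAt (fun u => pivec (q u, v u) ⬝ᵥ pivec (q u, v u))
      (2 * γ * b / rr ^ 3) t := by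
    refine hd_cast (hasDerivAt_dot hdP hdP) ?_
    show ((fun i => -(γ / rr ^ 3 * Q i)) ⬝ᵥ P) + (P ⬝ᵥ fun i => -(γ / rr ^ 3 * Q i))
        = 2 * γ * b / rr ^ 3
    have h2 : ((fun i => -(γ / rr ^ 3 * Q i)) ⬝ᵥ P) = -(γ / rr ^ 3) * (Q ⬝ᵥ P) := by
      simp [dotProduct, Finset.mul_sum]
      exact Finset.sum_congr rfl fun i _ => by ring
    have h3 : (P ⬝ᵥ fun i => -(γ / rr ^ 3 * Q i)) = -(γ / rr ^ 3) * (Q ⬝ᵥ P) := by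
      simp [dotProduct, Finset.mul_sum, dotProduct_comm]
      exact Finset.sum_congr rfl fun i _ => by ring
    rw [h2, h3, hQP]; ring
  -- conservation of energy
  have he0v : e0 ⬝ᵥ v t = v t 0 := by simp [e0, dotProduct, Fin.sum_univ_four]
  have hqv4 : q t ⬝ᵥ v t = 0 := hcqv
  have hkv : keplerRHS γ (q t) (v t) ⬝ᵥ v t = γ / rr ^ 3 * b := by
    simp only [keplerRHS, sub_dotProduct, smul_dotProduct, smul_eq_mul, he0v, hqv4,
      mul_zero, sub_zero]
    exact show γ / ((1:ℝ) - a ^ 2) ^ ((3:ℝ)/2) * b = γ / rr ^ 3 * b by rw [hw]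
  have hvk : v t ⬝ᵥ keplerRHS γ (q t) (v t) = γ / rr ^ 3 * b := by
    rw [dotProduct_comm]; exact hkv
  have hdvv : HasDerivAt (fun u => v u ⬝ᵥ v u) (2 * γ * b / rr ^ 3) t := by
    refine hd_cast (hasDerivAt_dot hdv hdv) ?_
    rw [hkv, hvk]; ring
  have hdmu : ∀ i : Fin 3, HasDerivAt (fun u => mu (q u, v u) i) ((0 : Fin 3 → ℝ) i) t := by
    intro i
    fin_cases i
    · exact hd_cast (((hdQ 1).mul (hdV 2)).sub ((hdQ 2).mul (hdV 1)))
        (show V 1 * V 2 + Q 1 * -(cc * Q 2) - (V 2 * V 1 + Q 2 * -(cc * Q 1)) = (0:ℝ) by ring)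
    · exact hd_cast (((hdQ 2).mul (hdV 0)).sub ((hdQ 0).mul (hdV 2)))
        (show V 2 * V 0 + Q 2 * -(cc * Q 0) - (V 0 * V 2 + Q 0 * -(cc * Q 2)) = (0:ℝ) by ring)
    · exact hd_cast (((hdQ 0).mul (hdV 1)).sub ((hdQ 1).mul (hdV 0)))
        (show V 0 * V 1 + Q 0 * -(cc * Q 1) - (V 1 * V 0 + Q 1 * -(cc * Q 0)) = (0:ℝ) by ring)
  have hdmm : HasDerivAt (fun u => mu (q u, v u) ⬝ᵥ mu (q u, v u)) 0 t := by
    refine hd_cast (hasDerivAt_dot hdmu hdmu) ?_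
    simp
  have hdaor : HasDerivAt (fun u => γ * q u 0 / Real.sqrt (1 - q u 0 ^ 2))
      (γ * b / rr ^ 3) t := by
    have hnum : HasDerivAt (fun u => γ * q u 0) (γ * b) t := hdq0.const_mul γ
    have hin : HasDerivAt (fun u => 1 - q u 0 ^ 2) (-(2 * a * b)) t := by
      refine hd_cast ((hasDerivAt_const t (1:ℝ)).sub (hdq0.pow 2)) ?_
      show (0:ℝ) - (2:ℕ) * a ^ (2-1) * b = -(2 * a * b)
      push_cast; ring
    have hsq := hin.sqrt (show (1:ℝ) - a ^ 2 ≠ 0 by rw [h1a]; positivity)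
    have h := hnum.div hsq (show Real.sqrt (1 - a ^ 2) ≠ 0 by rw [hsqrt1a]; exact hr)
    refine hd_cast h ?_
    show (γ * b * Real.sqrt (1 - a ^ 2) -
        γ * a * (-(2 * a * b) / (2 * Real.sqrt (1 - a ^ 2)))) / Real.sqrt (1 - a ^ 2) ^ 2
        = γ * b / rr ^ 3
    rw [hsqrt1a]
    field_simp
    linear_combination b * hF1
  have hdE : HasDerivAt (fun u => Een γ (q u, v u)) 0 t := by
    have h := ((HasDerivAt.const_mul (1/2 : ℝ) hdvv).sub hdaor).sub (hdmm.div_const 2)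
    exact hd_cast h (by ring)
  have hdnu : HasDerivAt (fun u => nuLS γ (q u, v u)) 0 t := by
    have hinner : HasDerivAt (fun u => -2 * Een γ (q u, v u)) (-2 * 0) t :=
      hdE.const_mul _
    have hsqrt := hinner.sqrt (show (-2 * EE : ℝ) ≠ 0 from ne_of_gt hm2E)
    have h := (hasDerivAt_const t γ).div hsqrt (show ss ≠ 0 from hs)
    exact hd_cast h (by simp)
  -- final assembly
  have hden : nuLS γ (q t, v t) * q t 0 ≠ 0 := mul_ne_zero hn ha
  have hγa : γ * q t 0 ≠ 0 := mul_ne_zero hγ' ha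
  constructor
  · refine hasDerivAt_pi.mpr fun j => ?_
    induction j using Fin.cases with
    | zero =>
      simp only [alphaLS, betaLS, Fin.cons_zero, Pi.smul_apply, smul_eq_mul]
      refine hd_cast (hdQP.div (hdnu.mul hdq0) hden) ?_
      show ((a * vv - γ / rr) * (nn * a) - (Q ⬝ᵥ P) * (0 * a + nn * b)) / (nn * a) ^ 2
          = ss / (a * rr) * (rr / (γ * a) * (P ⬝ᵥ P) - 1)
      rw [hQP, hPP, hnu]
      field_simp
      ring
    | succ i =>
      simp only [alphaLS, betaLS, Fin.cons_succ, Pi.smul_apply, smul_eq_mul, Pi.sub_apply]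
      refine hd_cast (((hdr.inv hr).mul (hdQ i)).sub
        ((hdQP.div ((hasDerivAt_const t γ).mul hdq0) hγa).mul (hdP i))) ?_
      show -(-(a * b) / rr) / rr ^ 2 * Q i + rr⁻¹ * V i -
          (((a * vv - γ / rr) * (γ * a) - (Q ⬝ᵥ P) * (0 * a + γ * b)) / (γ * a) ^ 2 * P i
            + (Q ⬝ᵥ P) / (γ * a) * -(γ / rr ^ 3 * Q i))
          = ss / (a * rr) * (rr / (nn * a) * P i)
      have h1 : ss / (a * rr) * (rr / (nn * a) * P i) = -2 * EE * P i / (γ * a ^ 2) := by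
        rw [hnu, ← hs2]; field_simp
      rw [h1, hE6, hQP, hPP, hPc i]
      field_simp
      linear_combination (a * b * Q i * γ ^ 2) * hF1
  · refine hasDerivAt_pi.mpr fun j => ?_
    induction j using Fin.cases with
    | zero =>
      simp only [alphaLS, betaLS, Fin.cons_zero, Pi.smul_apply, smul_eq_mul]
      refine hd_cast (((hdr.div ((hasDerivAt_const t γ).mul hdq0) hγa).mul hdPP).sub
        (hasDerivAt_const t 1)) ?_
      show (-(a * b) / rr * (γ * a) - rr * (0 * a + γ * b)) / (γ * a) ^ 2 * (P ⬝ᵥ P)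
          + rr / (γ * a) * (2 * γ * b / rr ^ 3) - 0
          = -(ss / (a * rr)) * ((Q ⬝ᵥ P) / (nn * a))
      have h1 : -(ss / (a * rr)) * ((Q ⬝ᵥ P) / (nn * a)) = -2 * EE * b / (γ * a ^ 2 * rr) := by
        rw [hQP, hnu, ← hs2]; field_simp
      rw [h1, hE6, hPP]
      field_simp
      linear_combination (-(rr * b * γ * (b^2 + a^2*vv))) * hF1
    | succ i =>
      simp only [alphaLS, betaLS, Fin.cons_succ, Pi.smul_apply, smul_eq_mul, Pi.sub_apply]
      refine hd_cast ((hdr.div (hdnu.mul hdq0) hden).mul (hdP i)) ?_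
      show (-(a * b) / rr * (nn * a) - rr * (0 * a + nn * b)) / (nn * a) ^ 2 * P i
          + rr / (nn * a) * -(γ / rr ^ 3 * Q i)
          = -(ss / (a * rr)) * (rr⁻¹ * Q i - (Q ⬝ᵥ P) / (γ * a) * P i)
      rw [hQP, hnu]
      field_simp
      linear_combination (-(rr * b * γ * P i)) * hF1


end
end
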